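/- Update invariance of min-plus services: let ψ = ψ^M for a cumulative matrix M and backlog b; suppose a tasks arrive and d are served with q := a+b, p := sup_{x∈U|q} ψ_1(x), and q ≥ d ≥ p. Define ṁ_{0j} := (min{m_{0,j+1}, q + m_{1,j+1}} ∸ d) and ṁ_{ij} := m_{i+1,j+1} for i>0. Then Ṁ is a cumulative matrix and for all x̊ ∈ U↑(q−d), the updated service ψ̇(x̊) := R^{-1}(ψ(x) ∸ dδ) (where x ∈ U|q corresponds to x̊ via x_{j+1} = x̊_j + d for j>0, x_1 = q) equals x̊ ⊗ Ṁ, i.e., ψ̇_j(x̊) = min_i(x̊_i + ṁ_{ij}). -/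

import Mathlib

/-- A cumulative vector: a nondecreasing sequence `ℕ → ℕ∞` starting at `0`. -/
def Cumulative (x : ℕ → ℕ∞) : Prop := x 0 = 0 ∧ Monotone x

/-- `U↑b`: cumulative vectors whose first entry is at least `b`. -/
def UUp (b : ℕ) : Set (ℕ → ℕ∞) := {x | Cumulative x ∧ (b : ℕ∞) ≤ x 1}

/-- `U|q`: cumulative vectors whose first entry is exactly `q`. -/
def UAt (q : ℕ) : Set (ℕ → ℕ∞) := {x | Cumulative x ∧ x 1 = (q : ℕ∞)}

/-- A cumulative matrix: strictly upper triangular with nondecreasing rows. -/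
def CumulativeMatrix (m : ℕ → ℕ → ℕ∞) : Prop :=
  (∀ i j, j ≤ i → m i j = 0) ∧ (∀ i j, m i j ≤ m i (j + 1))

/-- The min-plus service `ψ^M_j(x) = min_i (x_i + m_{ij})`. -/
noncomputable def minPlus (m : ℕ → ℕ → ℕ∞) (x : ℕ → ℕ∞) (j : ℕ) : ℕ∞ :=
  ⨅ i : ℕ, (x i + m i j)

/-- The arrival vector `x ∈ U|q` corresponding to the next-slot vector `x̊`:
`x_0 = 0`, `x_1 = q`, and `x_{j+1} = x̊_j + d` for `j ≥ 1`. -/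
def liftArr (q d : ℕ) (x' : ℕ → ℕ∞) : ℕ → ℕ∞ := fun k =>
  if k = 0 then 0 else if k = 1 then (q : ℕ∞) else x' (k - 1) + (d : ℕ∞)

/-- The updated cumulative matrix `Ṁ`. -/
noncomputable def updMat (q d : ℕ) (m : ℕ → ℕ → ℕ∞) (i j : ℕ) : ℕ∞ :=
  if i = 0 then min (m 0 (j + 1)) ((q : ℕ∞) + m 1 (j + 1)) - (d : ℕ∞)
  else m (i + 1) (j + 1)

private lemma my_iInf_sub_const (f : ℕ → ℕ∞) (d : ℕ∞) :
    (⨅ i, f i) - d = ⨅ i, (f i - d) := by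
  obtain ⟨_, ⟨i0, rfl⟩, hmin⟩ := wellFounded_lt.has_min (Set.range f) (Set.range_nonempty f)
  have h0 : ∀ j, f i0 ≤ f j := fun j => not_lt.1 (hmin _ (Set.mem_range_self j))
  have hfi : (⨅ i, f i) = f i0 := le_antisymm (iInf_le _ _) (le_iInf h0)
  rw [hfi]
  exact le_antisymm (le_iInf fun j => tsub_le_tsub_right (h0 j) d) (iInf_le _ i0)

private lemma my_min_tsub (A B d : ℕ∞) : min A B - d = min (A - d) (B - d) := by
  rcases le_total A B with h | h
  · rw [min_eq_left h, min_eq_left (tsub_le_tsub_right h d)]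
  · rw [min_eq_right h, min_eq_right (tsub_le_tsub_right h d)]

private lemma my_iInf_split1 (f : ℕ → ℕ∞) : (⨅ i, f i) = min (f 0) (⨅ k, f (k + 1)) := by
  apply le_antisymm
  · exact le_min (iInf_le _ 0) (le_iInf fun k => iInf_le _ (k + 1))
  · refine le_iInf fun i => ?_
    cases i with
    | zero => exact min_le_left _ _
    | succ k => exact (min_le_right _ _).trans (iInf_le _ k)

private lemma my_iInf_split2 (f : ℕ → ℕ∞) :
    (⨅ i, f i) = min (f 0) (min (f 1) (⨅ k, f (k + 2))) := by
  rw [my_iInf_split1 f, my_iInf_split1 (fun k => f (k + 1))]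

/-- Update invariance of min-plus services: if `ψ = ψ^M` and `q ≥ d ≥ p`, then
`Ṁ` is a cumulative matrix and the updated service is `ψ^Ṁ`. -/
theorem minPlus_update (m : ℕ → ℕ → ℕ∞) (hm : CumulativeMatrix m)
    (a b d : ℕ) (q : ℕ) (hq : q = a + b)
    (hdq : d ≤ q)
    (hpd : (⨆ x ∈ UAt q, minPlus m x 1) ≤ (d : ℕ∞)) :
    CumulativeMatrix (updMat q d m) ∧
    ∀ x' ∈ UUp (q - d), ∀ j : ℕ,
      minPlus m (liftArr q d x') (j + 1) - (d : ℕ∞) =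
        ⨅ i : ℕ, (x' i + updMat q d m i j) := by
  have hcancel : ∀ (u v : ℕ∞), u + (d : ℕ∞) + v - (d : ℕ∞) = u + v := by
    intro u v
    rw [add_right_comm]
    exact (ENat.addLECancellable_of_ne_top (WithTop.coe_ne_top)).add_tsub_cancel_right
  constructor
  · constructor
    · intro i j hij
      cases i with
      | zero =>
        interval_cases j
        -- need: min (m 0 1) (q + m 1 1) - d = 0
        have hm11 : m 1 1 = 0 := hm.1 1 1 le_rfl
        set xq : ℕ → ℕ∞ := fun k => if k = 0 then 0 else (q : ℕ∞) with hxq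
        have hxqmem : xq ∈ UAt q := by
          refine ⟨⟨rfl, monotone_nat_of_le_succ fun n => ?_⟩, rfl⟩
          cases n <;> simp [hxq]
        have hle : min (m 0 1) (q : ℕ∞) ≤ minPlus m xq 1 := by
          refine le_iInf fun i => ?_
          cases i with
          | zero => simpa [hxq] using min_le_left (m 0 1) (q : ℕ∞)
          | succ k =>
            calc min (m 0 1) (q : ℕ∞) ≤ (q : ℕ∞) := min_le_right _ _
              _ ≤ xq (k + 1) + m (k + 1) 1 := by simp [hxq]
        have hsup : minPlus m xq 1 ≤ (d : ℕ∞) :=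
          le_trans (le_iSup₂ (f := fun x (_ : x ∈ UAt q) => minPlus m x 1) xq hxqmem) hpd
        have : min (m 0 1) ((q : ℕ∞) + m 1 1) ≤ (d : ℕ∞) := by
          rw [hm11, add_zero]; exact hle.trans hsup
        simpa [updMat] using tsub_eq_zero_of_le this
      | succ k =>
        simp only [updMat, Nat.succ_ne_zero, if_false]
        exact hm.1 _ _ (by omega)
    · intro i j
      cases i with
      | zero =>
        simp only [updMat, if_pos rfl, ↓reduceIte]
        exact tsub_le_tsub_right
          (min_le_min (hm.2 0 (j + 1)) (add_le_add_right (hm.2 1 (j + 1)) _)) _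
      | succ k =>
        simp only [updMat, Nat.succ_ne_zero, if_false]
        exact hm.2 _ _
  · intro x' hx' j
    have hx0 : x' 0 = 0 := hx'.1.1
    rw [minPlus, my_iInf_sub_const,
      my_iInf_split2 (fun i => liftArr q d x' i + m i (j + 1) - (d : ℕ∞)),
      my_iInf_split1 (fun i => x' i + updMat q d m i j)]
    have e0 : liftArr q d x' 0 + m 0 (j + 1) - (d : ℕ∞) = m 0 (j + 1) - d := by
      simp [liftArr]
    have e1 : liftArr q d x' 1 + m 1 (j + 1) - (d : ℕ∞) = (q : ℕ∞) + m 1 (j + 1) - d := by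
      simp [liftArr]
    have e2 : ∀ k, liftArr q d x' (k + 2) + m (k + 2) (j + 1) - (d : ℕ∞)
        = x' (k + 1) + m (k + 2) (j + 1) := by
      intro k
      have : liftArr q d x' (k + 2) = x' (k + 1) + (d : ℕ∞) := by
        simp [liftArr]
      rw [this, hcancel]
    have e0' : x' 0 + updMat q d m 0 j
        = min (m 0 (j + 1) - (d : ℕ∞)) ((q : ℕ∞) + m 1 (j + 1) - d) := by
      rw [hx0, zero_add, updMat, if_pos rfl, my_min_tsub]
    have e1' : ∀ k, x' (k + 1) + updMat q d m (k + 1) j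
        = x' (k + 1) + m (k + 2) (j + 1) := by
      intro k
      simp only [updMat, Nat.succ_ne_zero, if_false]
    simp only [e0, e1, e2, e0', e1']
    rw [min_assoc]
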